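/- Let d ≥ 2, let x = (x_1,…,x_d) be a random vector, and let Y = f(x) be square-integrable. Suppose there exist measurable functions g and h with x_1 = g(x_2) almost surely and x_2 = h(x_1) almost surely. Then the Shapley values of variables 1 and 2 for the game val(u) = Var(E[Y | x_u]) are equal: φ_1 = φ_2. -/

import Mathlib

open Finset MeasureTheory ProbabilityTheory Filter Topology

/-- The Shapley value of player `j` for the cooperative game `val` on subsets of `Fin d`. -/
noncomputable def shapley {d : ℕ} (val : Finset (Fin d) → ℝ) (j : Fin d) : ℝ :=
  (d : ℝ)⁻¹ * ∑ u ∈ (Finset.univ.erase j).powerset,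
    ((Nat.choose (d - 1) u.card : ℝ))⁻¹ * (val (insert j u) - val u)

/-- The σ-algebra generated by the variables `x j`, `j ∈ u`. -/
def mGen {Ω : Type*} {d : ℕ} (x : Fin d → Ω → ℝ) (u : Finset (Fin d)) :
    MeasurableSpace Ω :=
  ⨆ j ∈ u, MeasurableSpace.comap (x j) Real.measurableSpace

section Aux

variable {Ω : Type*}

/-- The σ-algebra of sets μ-a.e. equal to an `m`-measurable set. -/
def aeCopy {m0 : MeasurableSpace Ω} (μ : Measure Ω) (m : MeasurableSpace Ω) :
    MeasurableSpace Ω where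
  MeasurableSet' s := ∃ t, MeasurableSet[m] t ∧ s =ᵐ[μ] t
  measurableSet_empty := ⟨∅, @MeasurableSet.empty _ m, Filter.EventuallyEq.rfl⟩
  measurableSet_compl := by
    rintro s ⟨t, ht, hst⟩
    exact ⟨tᶜ, ht.compl, hst.compl⟩
  measurableSet_iUnion := by
    intro f hf
    choose t ht hst using hf
    refine ⟨⋃ i, t i, MeasurableSet.iUnion ht, ?_⟩
    have h' : ∀ᵐ ω ∂μ, ∀ i, ω ∈ f i ↔ ω ∈ t i :=
      ae_all_iff.2 fun i => eventuallyEq_set.1 (hst i)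
    rw [eventuallyEq_set]
    filter_upwards [h'] with ω hω
    simp only [Set.mem_iUnion]
    exact exists_congr hω

lemma le_aeCopy {m0 : MeasurableSpace Ω} (μ : Measure Ω) (m : MeasurableSpace Ω) :
    m ≤ aeCopy μ m := fun s hs => ⟨s, hs, Filter.EventuallyEq.rfl⟩

lemma aeCopy_measurableSet {m0 : MeasurableSpace Ω} {μ : Measure Ω} {m : MeasurableSpace Ω}
    {s : Set Ω} (hs : MeasurableSet[aeCopy μ m] s) :
    ∃ t, MeasurableSet[m] t ∧ s =ᵐ[μ] t := hs

lemma exists_ae_eq_simpleFunc {m2 m0 : MeasurableSpace Ω} {μ : @Measure Ω m0}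
    [m1 : MeasurableSpace Ω] (h12 : m1 ≤ aeCopy μ m2) (φ : SimpleFunc Ω ℝ) :
    ∃ g : Ω → ℝ, Measurable[m2] g ∧ ⇑φ =ᵐ[μ] g := by
  classical
  induction φ using SimpleFunc.induction with
  | @const c s hs =>
    obtain ⟨t, ht, hst⟩ := aeCopy_measurableSet (h12 s hs)
    refine ⟨t.piecewise (fun _ => c) (fun _ => 0),
      Measurable.piecewise ht measurable_const measurable_const, ?_⟩
    filter_upwards [eventuallyEq_set.1 hst] with ω hω
    rw [SimpleFunc.coe_piecewise]
    by_cases hωs : ω ∈ s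
    · rw [Set.piecewise_eq_of_mem _ _ _ hωs,
        Set.piecewise_eq_of_mem _ _ _ (hω.1 hωs)]
      rfl
    · rw [Set.piecewise_eq_of_notMem _ _ _ hωs,
        Set.piecewise_eq_of_notMem _ _ _ (fun hc => hωs (hω.2 hc))]
      rfl
  | @add f₁ f₂ hdisj h1 h2 =>
    obtain ⟨g1, hg1, he1⟩ := h1
    obtain ⟨g2, hg2, he2⟩ := h2
    refine ⟨g1 + g2, hg1.add hg2, ?_⟩
    filter_upwards [he1, he2] with ω hω1 hω2
    simp [hω1, hω2]

lemma exists_stronglyMeasurable_limit {α : Type*} [MeasurableSpace α] (gs : ℕ → α → ℝ)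
    (hgs : ∀ n, Measurable (gs n)) :
    ∃ g : α → ℝ, StronglyMeasurable g ∧
      ∀ ω c, Tendsto (fun n => gs n ω) atTop (𝓝 c) → g ω = c := by
  classical
  have hCm : MeasurableSet {ω | ∃ c, Tendsto (fun n => gs n ω) atTop (𝓝 c)} :=
    measurableSet_exists_tendsto hgs
  set C : Set α := {ω | ∃ c, Tendsto (fun n => gs n ω) atTop (𝓝 c)} with hC
  set g : α → ℝ := fun ω => if hω : ∃ c, Tendsto (fun n => gs n ω) atTop (𝓝 c)
    then hω.choose else 0 with hg
  have hgm : Measurable g := by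
    refine measurable_of_tendsto_metrizable' (f := fun n => C.piecewise (gs n) fun _ => 0)
      atTop (fun n => Measurable.piecewise hCm (hgs n) measurable_const) ?_
    rw [tendsto_pi_nhds]
    intro ω
    by_cases hω : ω ∈ C
    · have hω' : ∃ c, Tendsto (fun n => gs n ω) atTop (𝓝 c) := hω
      have hgω : g ω = hω'.choose := dif_pos hω'
      rw [hgω]
      have : (fun n => C.piecewise (gs n) (fun _ => 0) ω) = fun n => gs n ω := by
        funext n; exact Set.piecewise_eq_of_mem _ _ _ hω
      rw [this]
      exact hω'.choose_spec
    · have hω' : ¬ ∃ c, Tendsto (fun n => gs n ω) atTop (𝓝 c) := hω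
      have hgω : g ω = 0 := dif_neg hω'
      rw [hgω]
      have : (fun n => C.piecewise (gs n) (fun _ => 0) ω) = fun _ => (0 : ℝ) := by
        funext n; exact Set.piecewise_eq_of_notMem _ _ _ hω
      rw [this]
      exact tendsto_const_nhds
  refine ⟨g, hgm.stronglyMeasurable, fun ω c hc => ?_⟩
  have hex : ∃ c, Tendsto (fun n => gs n ω) atTop (𝓝 c) := ⟨c, hc⟩
  have hgω : g ω = hex.choose := dif_pos hex
  rw [hgω]
  exact tendsto_nhds_unique hex.choose_spec hc

lemma aestronglyMeasurable'_of_le_aeCopy {m1 m2 m0 : MeasurableSpace Ω} {μ : @Measure Ω m0}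
    (h12 : m1 ≤ aeCopy μ m2) {f : Ω → ℝ} (hf : StronglyMeasurable[m1] f) :
    AEStronglyMeasurable[m2] f μ := by
  have htend : ∀ ω, Tendsto (fun n => hf.approx n ω) atTop (𝓝 (f ω)) := hf.tendsto_approx
  choose gs hgs hae using fun n => @exists_ae_eq_simpleFunc Ω m2 m0 μ m1 h12 (hf.approx n)
  obtain ⟨g, hgm, hglim⟩ := @exists_stronglyMeasurable_limit Ω m2 gs hgs
  refine ⟨g, hgm, ?_⟩
  filter_upwards [ae_all_iff.2 hae] with ω hω
  have htg : Tendsto (fun n => gs n ω) atTop (𝓝 (f ω)) := by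
    have : (fun n => gs n ω) = fun n => hf.approx n ω := by
      funext n; exact (hω n).symm
    rw [this]; exact htend ω
  exact (hglim ω (f ω) htg).symm

lemma condexp_ae_eq_condexp_of_aeCopy {m1 m2 m0 : MeasurableSpace Ω} {μ : @Measure Ω m0}
    [IsFiniteMeasure μ] (hm1 : m1 ≤ m0) (hm2 : m2 ≤ m0)
    (h12 : m1 ≤ aeCopy μ m2) (h21 : m2 ≤ aeCopy μ m1)
    {Y : Ω → ℝ} (hY : Integrable Y μ) : μ[Y|m1] =ᵐ[μ] μ[Y|m2] := by
  refine ae_eq_condExp_of_forall_setIntegral_eq hm2 hY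
    (fun s _ _ => integrable_condExp.integrableOn) (fun s hs _ => ?_)
    (aestronglyMeasurable'_of_le_aeCopy h12 stronglyMeasurable_condExp)
  obtain ⟨t, ht, hst⟩ := aeCopy_measurableSet (h21 s hs)
  calc ∫ x in s, (μ[Y|m1]) x ∂μ = ∫ x in t, (μ[Y|m1]) x ∂μ := setIntegral_congr_set hst
    _ = ∫ x in t, Y x ∂μ := setIntegral_condExp hm1 hY ht
    _ = ∫ x in s, Y x ∂μ := (setIntegral_congr_set hst).symm

lemma variance_congr_ae {m0 : MeasurableSpace Ω} {μ : Measure Ω} {f g : Ω → ℝ}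
    (h : f =ᵐ[μ] g) : variance f μ = variance g μ := by
  have hint : (∫ ω, f ω ∂μ) = ∫ ω, g ω ∂μ := integral_congr_ae h
  unfold ProbabilityTheory.variance ProbabilityTheory.evariance
  congr 1
  apply lintegral_congr_ae
  filter_upwards [h] with ω hω
  rw [hω, hint]

end Aux

/-- If two input variables determine each other almost surely (there is an almost-sure
bijection between them), then they have the same Shapley value for the game
`val u = Var(E[Y ∣ x_u])`. -/
theorem shapley_eq_of_bijection
    {Ω : Type*} [m0 : MeasurableSpace Ω] (μ : Measure Ω) [IsProbabilityMeasure μ]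
    (d : ℕ) (hd : 2 ≤ d) (x : Fin d → Ω → ℝ) (hx : ∀ j, Measurable (x j))
    (Y : Ω → ℝ) (hY2 : MemLp Y 2 μ)
    (g h : ℝ → ℝ) (hg : Measurable g) (hh : Measurable h)
    (hgx : (fun ω => x ⟨0, by omega⟩ ω) =ᵐ[μ] fun ω => g (x ⟨1, by omega⟩ ω))
    (hhx : (fun ω => x ⟨1, by omega⟩ ω) =ᵐ[μ] fun ω => h (x ⟨0, by omega⟩ ω)) :
    shapley (fun u => variance (μ[Y | mGen x u]) μ) ⟨0, by omega⟩
      = shapley (fun u => variance (μ[Y | mGen x u]) μ) ⟨1, by omega⟩ := by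
  classical
  have h01 : (0 : ℕ) < d := by omega
  have h11 : (1 : ℕ) < d := by omega
  set i0 : Fin d := ⟨0, h01⟩ with hi0
  set i1 : Fin d := ⟨1, h11⟩ with hi1
  set val : Finset (Fin d) → ℝ := fun u => variance (μ[Y | mGen x u]) μ with hvaldef
  have hY1 : Integrable Y μ := hY2.integrable one_le_two
  have hmle : ∀ u, mGen x u ≤ m0 := fun u => iSup₂_le fun j _ => (hx j).comap_le
  have hcomap_le : ∀ (j : Fin d) (u : Finset (Fin d)), j ∈ u →
      MeasurableSpace.comap (x j) Real.measurableSpace ≤ mGen x u := fun j u hj =>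
    le_iSup₂ (f := fun j (_ : j ∈ u) => MeasurableSpace.comap (x j) Real.measurableSpace) j hj
  have hcomap_ae : ∀ (a b : Fin d) (g' : ℝ → ℝ), Measurable g' →
      ((fun ω => x a ω) =ᵐ[μ] fun ω => g' (x b ω)) → ∀ u : Finset (Fin d), b ∈ u →
      MeasurableSpace.comap (x a) Real.measurableSpace ≤ aeCopy μ (mGen x u) := by
    intro a b g' hg' hab u hbu s hs
    rw [MeasurableSpace.measurableSet_comap] at hs
    obtain ⟨B, hB, rfl⟩ := hs
    refine ⟨x b ⁻¹' (g' ⁻¹' B), hcomap_le b u hbu (x b ⁻¹' (g' ⁻¹' B))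
      (MeasurableSpace.measurableSet_comap.2 ⟨g' ⁻¹' B, hg' hB, rfl⟩), ?_⟩
    rw [eventuallyEq_set]
    filter_upwards [hab] with ω hω
    simp only [Set.mem_preimage, hω]
  have hB0 : ∀ u : Finset (Fin d), i1 ∈ u →
      MeasurableSpace.comap (x i0) Real.measurableSpace ≤ aeCopy μ (mGen x u) :=
    fun u hu => hcomap_ae i0 i1 g hg hgx u hu
  have hB1 : ∀ u : Finset (Fin d), i0 ∈ u →
      MeasurableSpace.comap (x i1) Real.measurableSpace ≤ aeCopy μ (mGen x u) :=
    fun u hu => hcomap_ae i1 i0 h hh hhx u hu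
  have hcopy : ∀ u v : Finset (Fin d),
      (∀ j ∈ u, j ∈ v ∨ (j = i0 ∧ i1 ∈ v) ∨ (j = i1 ∧ i0 ∈ v)) →
      mGen x u ≤ aeCopy μ (mGen x v) := by
    intro u v hj
    refine iSup₂_le fun j hju => ?_
    rcases hj j hju with hjv | ⟨rfl, h1v⟩ | ⟨rfl, h0v⟩
    · exact le_trans (hcomap_le j v hjv) (le_aeCopy μ (mGen x v))
    · exact hB0 v h1v
    · exact hB1 v h0v
  have hval_eq : ∀ u v : Finset (Fin d),
      (∀ j ∈ u, j ∈ v ∨ (j = i0 ∧ i1 ∈ v) ∨ (j = i1 ∧ i0 ∈ v)) →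
      (∀ j ∈ v, j ∈ u ∨ (j = i0 ∧ i1 ∈ u) ∨ (j = i1 ∧ i0 ∈ u)) →
      val u = val v := fun u v h1 h2 =>
    variance_congr_ae (condexp_ae_eq_condexp_of_aeCopy (hmle u) (hmle v)
      (hcopy u v h1) (hcopy v u h2) hY1)
  set σ : Fin d → Fin d := ⇑(Equiv.swap i0 i1) with hσdef
  have hσ0 : σ i0 = i1 := Equiv.swap_apply_left i0 i1
  have hσ1 : σ i1 = i0 := Equiv.swap_apply_right i0 i1
  have hσσ : ∀ z, σ (σ z) = z := fun z => Equiv.swap_apply_self i0 i1 z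
  have hinv2 : ∀ u : Finset (Fin d), (u.image σ).image σ = u := by
    intro u
    rw [Finset.image_image]
    have : (σ ∘ σ) = id := funext hσσ
    rw [this, Finset.image_id]
  have hmemimg : ∀ (a : Fin d) (u : Finset (Fin d)), σ a ∈ u.image σ ↔ a ∈ u := by
    intro a u
    rw [Finset.mem_image]
    constructor
    · rintro ⟨b, hb, hba⟩
      rwa [(Equiv.swap i0 i1).injective hba] at hb
    · exact fun ha => ⟨a, ha, rfl⟩
  have keyswap : ∀ u : Finset (Fin d), val (u.image σ) = val u := by
    intro u
    refine hval_eq (u.image σ) u ?_ ?_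
    · intro j hj
      rw [Finset.mem_image] at hj
      obtain ⟨k, hk, rfl⟩ := hj
      by_cases hk0 : k = i0
      · subst hk0; rw [hσ0]; exact Or.inr (Or.inr ⟨rfl, hk⟩)
      · by_cases hk1 : k = i1
        · subst hk1; rw [hσ1]; exact Or.inr (Or.inl ⟨rfl, hk⟩)
        · have : σ k = k := Equiv.swap_apply_of_ne_of_ne hk0 hk1
          rw [this]; exact Or.inl hk
    · intro k hk
      by_cases hk0 : k = i0
      · subst hk0
        refine Or.inr (Or.inl ⟨rfl, ?_⟩)
        rw [← hσ0]; exact (hmemimg i0 u).2 hk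
      · by_cases hk1 : k = i1
        · subst hk1
          refine Or.inr (Or.inr ⟨rfl, ?_⟩)
          rw [← hσ1]; exact (hmemimg i1 u).2 hk
        · left
          have : σ k = k := Equiv.swap_apply_of_ne_of_ne hk0 hk1
          rw [← this]; exact (hmemimg k u).2 hk
  show shapley val i0 = shapley val i1
  unfold shapley
  congr 1
  refine Finset.sum_nbij' (i := fun u => u.image σ) (j := fun u => u.image σ)
    ?_ ?_ ?_ ?_ ?_
  · intro u hu
    rw [Finset.mem_powerset, Finset.subset_erase] at hu ⊢
    refine ⟨Finset.subset_univ _, ?_⟩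
    intro hcon
    rw [← hσ0, hmemimg] at hcon
    exact hu.2 hcon
  · intro u hu
    rw [Finset.mem_powerset, Finset.subset_erase] at hu ⊢
    refine ⟨Finset.subset_univ _, ?_⟩
    intro hcon
    rw [← hσ1, hmemimg] at hcon
    exact hu.2 hcon
  · intro u _; exact hinv2 u
  · intro u _; exact hinv2 u
  · intro u hu
    have hcard : (u.image σ).card = u.card :=
      Finset.card_image_of_injective u (Equiv.swap i0 i1).injective
    have h1 : insert i1 (u.image σ) = (insert i0 u).image σ := by
      rw [Finset.image_insert, hσ0]
    rw [hcard, h1, keyswap (insert i0 u), keyswap u]
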